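/- Let W > 0, λ > 0, and m ∈ (0,1] satisfy λ = (1+W)³·φ(m/(1+W))². Then there exists u : ℝ → ℝ that is continuously differentiable on [0,1], twice differentiable on (0,1) with u''(x) = λ/(2·(1+u(x)+W)²) for all x ∈ (0,1), and satisfies u(0) = −m, u'(0) = 0, u(1) = 0, and u(x) ≥ −m for x ∈ [0,1]. -/

import Mathlib

/-- `φ(r) = √(r(1−r)) + (1−r)^{3/2}·log(1+√r) − (1/2)(1−r)^{3/2}·log(1−r)`. -/
noncomputable def phi (r : ℝ) : ℝ :=
  Real.sqrt (r * (1 - r)) + (1 - r) ^ ((3 : ℝ) / 2) * Real.log (1 + Real.sqrt r)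
    - (1 / 2) * (1 - r) ^ ((3 : ℝ) / 2) * Real.log (1 - r)

/-- `Λ_*(W) = (1+W)³·φ(1/(1+W))²`. -/
noncomputable def LambdaStar (W : ℝ) : ℝ := (1 + W) ^ 3 * (phi (1 / (1 + W))) ^ 2

lemma aux_cosh_sinh_log (q s : ℝ) (hq0 : 0 < q) (hs0 : 0 < s) (h : s ^ 2 + q ^ 2 = 1) :
    Real.cosh (Real.log ((1 + q)/s)) = 1 / s ∧
    Real.sinh (Real.log ((1 + q)/s)) = q / s := by
  have hq1 : (0:ℝ) < 1 + q := by linarith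
  have hexp : Real.exp (Real.log ((1 + q)/s)) = (1 + q)/s := Real.exp_log (by positivity)
  have hexpn : Real.exp (-Real.log ((1 + q)/s)) = s/(1 + q) := by
    rw [Real.exp_neg, hexp]; field_simp
  constructor
  · rw [Real.cosh_eq, hexp, hexpn]
    rw [div_add_div _ _ (by positivity) (by positivity), div_div]
    rw [div_eq_div_iff (by positivity) (by positivity)]
    nlinarith [h]
  · rw [Real.sinh_eq, hexp, hexpn]
    rw [div_sub_div _ _ (by positivity) (by positivity), div_div]
    rw [div_eq_div_iff (by positivity) (by positivity)]
    nlinarith [h]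

set_option maxHeartbeats 1000000 in
/-- Sufficient condition for the unzipped shooting problem: if `λ = (1+W)³·φ(m/(1+W))²`,
then it has a solution with minimum `−m` at `x = 0`. -/
theorem stmt_7 (W lam m : ℝ) (hW : 0 < W) (hlam : 0 < lam)
    (hm : m ∈ Set.Ioc (0 : ℝ) 1)
    (heq : lam = (1 + W) ^ 3 * (phi (m / (1 + W))) ^ 2) :
    ∃ u u' : ℝ → ℝ,
      (∀ x ∈ Set.Icc (0 : ℝ) 1, HasDerivWithinAt u (u' x) (Set.Icc (0 : ℝ) 1) x) ∧
      ContinuousOn u' (Set.Icc (0 : ℝ) 1) ∧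
      (∀ x ∈ Set.Ioo (0 : ℝ) 1, HasDerivAt u' (lam / (2 * (1 + u x + W) ^ 2)) x) ∧
      u 0 = -m ∧ u' 0 = 0 ∧ u 1 = 0 ∧
      ∀ x ∈ Set.Icc (0 : ℝ) 1, u x ≥ -m := by
  obtain ⟨hm0, hm1⟩ := hm
  set a : ℝ := 1 + W with ha_def
  have ha1 : (1:ℝ) < a := by simp only [ha_def]; linarith
  have ha0 : (0:ℝ) < a := by linarith
  set r : ℝ := m / a with hr_def
  have hr0 : 0 < r := div_pos hm0 ha0
  have hr1 : r < 1 := (div_lt_one ha0).2 (lt_of_le_of_lt hm1 ha1)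
  have hmr : m = a * r := by rw [hr_def]; field_simp
  set c : ℝ := 1 - r with hc_def
  have hc0 : 0 < c := by simp only [hc_def]; linarith
  set s : ℝ := Real.sqrt c with hs_def
  have hs0 : 0 < s := Real.sqrt_pos.2 hc0
  have hs2 : s ^ 2 = c := Real.sq_sqrt hc0.le
  set q : ℝ := Real.sqrt r with hq_def
  have hq0 : 0 < q := Real.sqrt_pos.2 hr0
  have hq2 : q ^ 2 = r := Real.sq_sqrt hr0.le
  set p : ℝ := phi r with hp_def
  -- c^{3/2} = c * s
  have hc32 : c ^ ((3:ℝ)/2) = c * s := by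
    rw [show (3:ℝ)/2 = 1 + 1/2 by norm_num, Real.rpow_add hc0, Real.rpow_one,
      hs_def, Real.sqrt_eq_rpow]
  have hsc : Real.sqrt (r * c) = q * s := by
    rw [hq_def, hs_def, ← Real.sqrt_mul hr0.le]
  have hphi_expand : p = q * s + (c * s) * Real.log (1 + q)
      - (1/2) * (c * s) * Real.log c := by
    rw [hp_def, phi, ← hc_def, ← hq_def, hsc, hc32]
  -- positivity of phi r
  have hp0 : 0 < p := by
    have h2 : 0 ≤ (c * s) * Real.log (1 + q) := by
      apply mul_nonneg (by positivity)
      apply Real.log_nonneg; linarith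
    have h3 : Real.log c ≤ 0 := Real.log_nonpos hc0.le (by linarith)
    have h4 : 0 ≤ (c*s) * (-Real.log c) := mul_nonneg (mul_pos hc0 hs0).le (neg_nonneg.2 h3)
    rw [hphi_expand]
    nlinarith [mul_pos hq0 hs0]
  have hlam' : lam = a ^ 3 * p ^ 2 := by rw [heq, hp_def, hr_def, ha_def]
  -- discharge the let-bodies: from now on only the recorded facts matter
  clear_value a r c s q p
  clear heq hlam hr_def hq_def hp_def hc32 hsc
  have hq2' : q ^ 2 = 1 - c := by rw [hq2, hc_def]; ring
  set k : ℝ := c * s / p with hk_def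
  have hk0 : 0 < k := by positivity
  -- the parametrization x = g θ
  set g : ℝ → ℝ := fun θ => k * θ + (k/2) * Real.sinh (2*θ) with hg_def
  have hg_deriv : ∀ θ : ℝ, HasDerivAt g (2 * k * Real.cosh θ ^ 2) θ := by
    intro θ
    have h1 : HasDerivAt (fun θ : ℝ => k * θ) k θ := by
      simpa using (hasDerivAt_id θ).const_mul k
    have h2 : HasDerivAt (fun θ : ℝ => Real.sinh (2*θ)) (Real.cosh (2*θ) * 2) θ :=
      (Real.hasDerivAt_sinh (2*θ)).comp θ (by simpa using (hasDerivAt_id θ).const_mul 2)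
    have h3 := h1.add (h2.const_mul (k/2))
    refine h3.congr_deriv ?_
    rw [Real.cosh_two_mul, Real.sinh_sq]
    ring
  have hg_cont : Continuous g := by
    apply Continuous.add (continuous_const.mul continuous_id)
    exact continuous_const.mul (Real.continuous_sinh.comp (continuous_const.mul continuous_id))
  have hg_mono : StrictMono g := by
    apply strictMono_of_deriv_pos
    intro θ
    rw [(hg_deriv θ).deriv]
    positivity
  have hg_surj : Function.Surjective g := by
    have hlin_top : Filter.Tendsto (fun θ : ℝ => k * θ) Filter.atTop Filter.atTop :=
      Filter.Tendsto.const_mul_atTop hk0 Filter.tendsto_id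
    have hlin_bot : Filter.Tendsto (fun θ : ℝ => k * θ) Filter.atBot Filter.atBot :=
      Filter.Tendsto.const_mul_atBot hk0 Filter.tendsto_id
    apply hg_cont.surjective
    · apply Filter.tendsto_atTop_mono' _ _ hlin_top
      filter_upwards [Filter.eventually_ge_atTop (0:ℝ)] with θ hθ
      have hsn : 0 ≤ Real.sinh (2*θ) := Real.sinh_nonneg_iff.2 (by linarith)
      simp only [hg_def]
      nlinarith
    · apply Filter.tendsto_atBot_mono' _ _ hlin_bot
      filter_upwards [Filter.eventually_le_atBot (0:ℝ)] with θ hθ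
      have hsn : Real.sinh (2*θ) ≤ 0 := by
        rw [← Real.sinh_zero]
        exact Real.sinh_le_sinh.2 (by linarith)
      simp only [hg_def]
      nlinarith
  set T : ℝ → ℝ := fun x =>
    (StrictMono.orderIsoOfSurjective g hg_mono hg_surj).symm x with hT_def
  have hT_cont : Continuous T :=
    ((StrictMono.orderIsoOfSurjective g hg_mono hg_surj).symm : ℝ ≃o ℝ).continuous
  have hgT : ∀ x, g (T x) = x := fun x =>
    StrictMono.orderIsoOfSurjective_self_symm_apply g hg_mono hg_surj x
  have hTval : ∀ θ, T (g θ) = θ := fun θ =>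
    StrictMono.orderIsoOfSurjective_symm_apply_self g hg_mono hg_surj θ
  have hT_deriv : ∀ x : ℝ, HasDerivAt T (2 * k * Real.cosh (T x) ^ 2)⁻¹ x := by
    intro x
    exact HasDerivAt.of_local_left_inverse hT_cont.continuousAt (hg_deriv (T x))
      (by positivity) (Filter.Eventually.of_forall hgT)
  have hT0 : T 0 = 0 := by
    have h0 : g 0 = 0 := by simp [hg_def]
    rw [← h0, hTval]
    exact h0.symm
  -- the endpoint parameter
  set θ₁ : ℝ := Real.log ((1 + q)/s) with hθ₁_def
  have hq1 : (0:ℝ) < 1 + q := by linarith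
  obtain ⟨hcosh1, hsinh1⟩ : Real.cosh θ₁ = 1 / s ∧ Real.sinh θ₁ = q / s := by
    rw [hθ₁_def]
    exact aux_cosh_sinh_log q s hq0 hs0 (by rw [hs2, hq2']; ring)
  have hlogs : Real.log s = (1/2) * Real.log c := by
    rw [hs_def, Real.log_sqrt hc0.le]; ring
  have hθ₁eq : θ₁ = Real.log (1 + q) - (1/2) * Real.log c := by
    rw [hθ₁_def, Real.log_div (by positivity) (ne_of_gt hs0), hlogs]
  have hpeq : p = c * s * θ₁ + s * q := by
    rw [hphi_expand, hθ₁eq]; ring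
  have hgθ₁ : g θ₁ = 1 := by
    have h5 : (k/2) * Real.sinh (2*θ₁) = k * q / c := by
      rw [Real.sinh_two_mul, hsinh1, hcosh1, ← hs2]
      field_simp
    have hP : c * s * θ₁ + s * q ≠ 0 := by rw [← hpeq]; exact hp0.ne'
    simp only [hg_def]
    rw [h5, hk_def, hpeq]
    field_simp
    ring_nf
    rw [← add_mul, mul_inv_cancel₀ (fun h => hP (by linear_combination s * h))]
  have hT1 : T 1 = θ₁ := by rw [← hgθ₁, hTval]
  -- the solution
  set u : ℝ → ℝ := fun x => a * c * Real.cosh (T x) ^ 2 - a with hu_def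
  set D : ℝ → ℝ := fun x => (a * c / k) * (Real.sinh (T x) / Real.cosh (T x)) with hD_def
  have hcoshpos : ∀ x : ℝ, 0 < Real.cosh (T x) := fun x => Real.cosh_pos _
  have hu_deriv : ∀ x : ℝ, HasDerivAt u (D x) x := by
    intro x
    have h1 : HasDerivAt (fun θ : ℝ => Real.cosh θ ^ 2)
        (2 * Real.cosh (T x) * Real.sinh (T x)) (T x) := by
      have := (Real.hasDerivAt_cosh (T x)).fun_pow 2
      simpa [mul_comm, mul_assoc, mul_left_comm] using this
    have h2 := (h1.comp x (hT_deriv x)).const_mul (a * c)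
    have h3 := h2.sub_const a
    refine h3.congr_deriv ?_
    have hC := (hcoshpos x).ne'
    simp only [hD_def]
    field_simp
  have hD_deriv : ∀ x : ℝ, HasDerivAt D (lam / (2 * (1 + u x + W) ^ 2)) x := by
    intro x
    have hC0 : 0 < Real.cosh (T x) := hcoshpos x
    have h1 : HasDerivAt (fun θ : ℝ => Real.sinh θ / Real.cosh θ)
        ((Real.cosh (T x) * Real.cosh (T x) - Real.sinh (T x) * Real.sinh (T x))
          / Real.cosh (T x) ^ 2) (T x) :=
      (Real.hasDerivAt_sinh (T x)).div (Real.hasDerivAt_cosh (T x)) hC0.ne'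
    have h2 := (h1.comp x (hT_deriv x)).const_mul (a * c / k)
    refine h2.congr_deriv ?_
    have hCS : Real.cosh (T x) * Real.cosh (T x)
        - Real.sinh (T x) * Real.sinh (T x) = 1 := by
      nlinarith [Real.cosh_sq_sub_sinh_sq (T x)]
    have huW : 1 + u x + W = a * c * Real.cosh (T x) ^ 2 := by
      simp only [hu_def]; rw [ha_def]; ring
    rw [huW, hCS, hlam', hk_def, ← hs2]
    field_simp
  have hu0 : u 0 = -m := by
    simp only [hu_def]; rw [hT0, Real.cosh_zero, hmr, hc_def]; ring
  have hu1 : u 1 = 0 := by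
    simp only [hu_def]
    rw [hT1, hcosh1, div_pow, one_pow, hs2]
    field_simp
    ring
  have hD0 : D 0 = 0 := by
    simp only [hD_def]; rw [hT0, Real.sinh_zero]; simp
  have hD_cont : Continuous D := by
    apply continuous_const.mul
    exact (Real.continuous_sinh.comp hT_cont).div (Real.continuous_cosh.comp hT_cont)
      fun x => (hcoshpos x).ne'
  refine ⟨u, D, ?_, hD_cont.continuousOn, ?_, hu0, hD0, hu1, ?_⟩
  · intro x _; exact (hu_deriv x).hasDerivWithinAt
  · intro x _; exact hD_deriv x
  · intro x _
    have h1 : 1 ≤ Real.cosh (T x) ^ 2 := by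
      nlinarith [Real.one_le_cosh (T x)]
    simp only [hu_def, ge_iff_le, hmr]
    nlinarith [mul_pos ha0 hc0]
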